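/- Let u, v : ℝⁿ → ℝ ∪ {+∞} be lower semicontinuous convex functions, not identically +∞, with u ∧ v convex. Then for sufficiently small r > 0, reg_r(u ∧ v) = reg_r u ∧ reg_r v and reg_r(u ∨ v) = reg_r u ∨ reg_r v. -/

import Mathlib

open Filter Topology MeasureTheory
open scoped RealInnerProductSpace ENNReal Classical

noncomputable section

/-- Euclidean space ℝⁿ. -/
abbrev En (n : ℕ) := EuclideanSpace ℝ (Fin n)

/-- Convexity of an `EReal`-valued function, via convexity of its epigraph. -/
def ConvexFn {n : ℕ} (u : En n → EReal) : Prop :=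
  Convex ℝ {p : En n × ℝ | u p.1 ≤ (p.2 : EReal)}

/-- The subdifferential of `u` at `x`. -/
def subdiff {n : ℕ} (u : En n → EReal) (x : En n) : Set (En n) :=
  {y | ∀ z, u x + (⟪z - x, y⟫ : EReal) ≤ u z}

/-- The convex (Legendre–Fenchel) conjugate of `u`. -/
def conj {n : ℕ} (u : En n → EReal) (y : En n) : EReal :=
  ⨆ x, ((⟪x, y⟫ : EReal) - u x)

/-- Graph of the subdifferential map. -/
def sgraph {n : ℕ} (u : En n → EReal) : Set (En n × En n) :=
  {p | p.2 ∈ subdiff u p.1}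

/-- Parallel set `P_s(u, η)`. -/
def parallelSet {n : ℕ} (u : En n → EReal) (η : Set (En n × En n)) (s : ℝ) : Set (En n) :=
  {z | ∃ p ∈ η, p.2 ∈ subdiff u p.1 ∧ z = p.1 + s • p.2}

/-- Convex indicator function of a set. -/
def indFn {n : ℕ} (K : Set (En n)) (x : En n) : EReal :=
  if x ∈ K then 0 else ⊤

/-- Lipschitz regularization (Pasch–Hausdorff envelope) `reg_r u = (u* + I_{B_{1/r}})*`. -/
def regLip {n : ℕ} (u : En n → EReal) (r : ℝ) : En n → EReal :=
  conj (fun y => conj u y + indFn (Metric.closedBall (0 : En n) (1 / r)) y)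

/-! ### Auxiliary material -/

section Aux

lemma ereal_bot_of_forall_le {a : EReal} (h : ∀ q : ℝ, a ≤ (q : EReal)) : a = ⊥ := by
  by_contra ha
  obtain ⟨q, _, hq2⟩ := EReal.lt_iff_exists_real_btwn.1 (Ne.bot_lt ha)
  exact absurd (h q) (not_le.2 hq2)

lemma ereal_le_of_forall_lt_real {a b : EReal} (h : ∀ q : ℝ, b < (q : EReal) → a ≤ (q : EReal)) :
    a ≤ b := by
  by_contra hab
  obtain ⟨q, hq1, hq2⟩ := EReal.lt_iff_exists_real_btwn.1 (not_le.1 hab)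
  exact absurd (h q hq1) (not_le.2 hq2)

lemma real_le_of_forall_pos_le_add {a b : ℝ} (h : ∀ ε : ℝ, 0 < ε → a ≤ b + ε) : a ≤ b := by
  by_contra hab
  have := h ((a - b) / 2) (by linarith [not_le.1 hab])
  linarith [not_le.1 hab]

/-- The Pasch–Hausdorff (inf-convolution) envelope. -/
def pasch {n : ℕ} (w : En n → EReal) (c : ℝ) (x : En n) : EReal :=
  ⨅ z, (w z + ((c * ‖x - z‖ : ℝ) : EReal))

lemma pasch_le {n : ℕ} (w : En n → EReal) (c : ℝ) (x z : En n) :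
    pasch w c x ≤ w z + ((c * ‖x - z‖ : ℝ) : EReal) := iInf_le _ z

lemma pasch_mono {n : ℕ} {w w' : En n → EReal} (h : ∀ z, w z ≤ w' z) (c : ℝ) (x : En n) :
    pasch w c x ≤ pasch w' c x := iInf_mono fun z => add_le_add_left (h z) _

lemma ereal_add_coe_cancel (x : EReal) (k : ℝ) : x + (k : EReal) + ((-k : ℝ) : EReal) = x := by
  induction x using EReal.rec with
  | bot => simp
  | coe r => rw [← EReal.coe_add, ← EReal.coe_add]; norm_num
  | top => rw [EReal.top_add_of_ne_bot (EReal.coe_ne_bot _),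
      EReal.top_add_of_ne_bot (EReal.coe_ne_bot _)]

lemma ereal_iInf_add_coe {ι : Sort*} [Nonempty ι] (f : ι → EReal) (k : ℝ) :
    ⨅ i, (f i + (k : EReal)) = (⨅ i, f i) + (k : EReal) := by
  apply le_antisymm
  · have h : ∀ g : ι → EReal, ∀ m : ℝ, (⨅ i, g i) + (m : EReal) ≤ ⨅ i, (g i + (m : EReal)) :=
      fun g m => le_iInf fun i => add_le_add_left (iInf_le _ i) _
    have h2 := h (fun i => f i + (k : EReal)) (-k)
    have h3 : ∀ i : ι, f i + (k:EReal) + ((-k:ℝ):EReal) = f i := fun i => ereal_add_coe_cancel _ _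
    simp only [h3] at h2
    calc ⨅ i, (f i + (k : EReal))
        = (⨅ i, (f i + (k:EReal))) + ((-k:ℝ):EReal) + ((- -k : ℝ):EReal) := by
          rw [ereal_add_coe_cancel]
      _ ≤ (⨅ i, f i) + ((- -k : ℝ):EReal) := add_le_add_left h2 _
      _ = (⨅ i, f i) + (k:EReal) := by norm_num
  · exact le_iInf fun i => add_le_add_left (iInf_le _ i) _

lemma pasch_le_add {n : ℕ} (w : En n → EReal) {c : ℝ} (hc : 0 ≤ c) (x x' : En n) :
    pasch w c x ≤ pasch w c x' + ((c * ‖x - x'‖ : ℝ) : EReal) := by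
  have heq : pasch w c x' + ((c * ‖x - x'‖ : ℝ) : EReal)
      = ⨅ z, (w z + ((c * ‖x' - z‖ : ℝ) : EReal) + ((c * ‖x - x'‖ : ℝ) : EReal)) :=
    (ereal_iInf_add_coe _ _).symm
  rw [heq]
  refine le_iInf fun z => ?_
  refine le_trans (pasch_le w c x z) ?_
  rw [add_assoc, ← EReal.coe_add]
  refine add_le_add_right (EReal.coe_le_coe_iff.2 ?_) _
  have h := norm_sub_le_norm_sub_add_norm_sub x x' z
  nlinarith [norm_nonneg (x - x'), norm_nonneg (x' - z)]

lemma pasch_ne_top {n : ℕ} {w : En n → EReal} (hwp : ∃ z, w z ≠ ⊤) (c : ℝ) (x : En n) :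
    pasch w c x ≠ ⊤ := by
  obtain ⟨z, hz⟩ := hwp
  exact ne_top_of_le_ne_top (EReal.add_lt_top hz (EReal.coe_ne_top _)).ne (pasch_le w c x z)

lemma exists_subgradient {n : ℕ} (f : En n → ℝ) (hconv : ConvexOn ℝ Set.univ f)
    (hcont : Continuous f) (x : En n) :
    ∃ y : En n, ∀ z, f x + ⟪z - x, y⟫ ≤ f z := by
  set S : Set (En n × ℝ) := {p | f p.1 < p.2} with hS
  have hSconv : Convex ℝ S := by
    rintro ⟨z₁, t₁⟩ h₁ ⟨z₂, t₂⟩ h₂ a b ha hb hab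
    simp only [hS, Set.mem_setOf_eq] at h₁ h₂ ⊢
    have hf := hconv.2 (Set.mem_univ z₁) (Set.mem_univ z₂) ha hb hab
    simp only [smul_eq_mul] at hf ⊢
    have key : a * f z₁ + b * f z₂ < a * t₁ + b * t₂ := by
      rcases eq_or_lt_of_le ha with h | h
      · have hb1 : b = 1 := by linarith
        rw [← h, hb1]; simpa using h₂
      · exact add_lt_add_of_lt_of_le (mul_lt_mul_of_pos_left h₁ h)
          (mul_le_mul_of_nonneg_left h₂.le hb)
    exact lt_of_le_of_lt hf key
  have hSopen : IsOpen S := by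
    have : S = {p : En n × ℝ | 0 < p.2 - f p.1} := by
      ext p; simp [hS, sub_pos]
    rw [this]
    exact isOpen_lt continuous_const (continuous_snd.sub (hcont.comp continuous_fst))
  have hxS : ((x, f x) : En n × ℝ) ∉ S := by simp [hS]
  obtain ⟨φ, hφ⟩ := geometric_hahn_banach_open_point hSconv hSopen hxS
  set β : ℝ := φ (0, 1) with hβdef
  set ψ : En n →L[ℝ] ℝ := φ.comp (ContinuousLinearMap.inl ℝ (En n) ℝ) with hψdef
  have hψ : ∀ (z : En n) (t : ℝ), φ (z, t) = ψ z + t * β := by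
    intro z t
    have : ((z, t) : En n × ℝ) = (z, 0) + t • ((0 : En n), (1:ℝ)) := by
      simp [Prod.ext_iff]
    rw [this, map_add, _root_.map_smul]
    simp only [hψdef, ContinuousLinearMap.comp_apply, ContinuousLinearMap.inl_apply,
      smul_eq_mul, hβdef]
  have hβ : β < 0 := by
    have h1 := hφ (x, f x + 1) (by simp only [hS, Set.mem_setOf_eq]; linarith)
    rw [hψ x (f x + 1), hψ x (f x)] at h1
    linarith
  have hkey : ∀ z, ψ z + f z * β ≤ ψ x + f x * β := by
    intro z
    apply real_le_of_forall_pos_le_add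
    intro ε hε
    have hβ' : (0:ℝ) < -β := by linarith
    have hq : 0 < ε / (-β) := by positivity
    have h1 := hφ (z, f z + ε / (-β))
      (by simp only [hS, Set.mem_setOf_eq]; linarith)
    rw [hψ z _, hψ x _] at h1
    have h2 : (f z + ε / (-β)) * β = f z * β - ε := by
      have hβne : β ≠ 0 := by linarith
      field_simp
      ring
    linarith
  set g : En n := (InnerProductSpace.toDual ℝ (En n)).symm ψ with hgdef
  have hg : ∀ z : En n, ⟪z, g⟫ = ψ z := by
    intro z
    rw [real_inner_comm, hgdef, InnerProductSpace.toDual_symm_apply]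
  refine ⟨(-β)⁻¹ • g, fun z => ?_⟩
  have hinner : ⟪z - x, (-β)⁻¹ • g⟫ = (-β)⁻¹ * (ψ z - ψ x) := by
    rw [real_inner_smul_right, inner_sub_left, hg, hg]
  rw [hinner]
  have hβ' : (0:ℝ) < -β := by linarith
  have hk := hkey z
  have h5 : (-β)⁻¹ * (ψ z - ψ x) ≤ f z - f x := by
    rw [inv_mul_le_iff₀ hβ']
    nlinarith
  linarith

lemma isClosed_sub_lsc {g : ℝ → EReal} (hg : LowerSemicontinuous g) {L : ℝ → ℝ}
    (hL : Continuous L) : IsClosed {t : ℝ | g t ≤ ((L t : ℝ) : EReal)} := by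
  rw [← isOpen_compl_iff, isOpen_iff_mem_nhds]
  intro t₀ ht₀
  simp only [Set.mem_compl_iff, Set.mem_setOf_eq, not_le] at ht₀
  obtain ⟨q, hq1, hq2⟩ := EReal.lt_iff_exists_real_btwn.1 ht₀
  have h1 : ∀ᶠ t in 𝓝 t₀, (q : EReal) < g t := hg t₀ (q : EReal) hq2
  have h2 : ∀ᶠ t in 𝓝 t₀, L t < q :=
    (hL.continuousAt (x := t₀)).eventually_lt continuousAt_const (EReal.coe_lt_coe_iff.1 hq1)
  filter_upwards [h1, h2] with t h1t h2t
  simp only [Set.mem_compl_iff, Set.mem_setOf_eq, not_le]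
  exact lt_trans (EReal.coe_lt_coe_iff.2 h2t) h1t

lemma convexFn_mem {n : ℕ} {w : En n → EReal} (hw : ConvexFn w) {z₁ z₂ : En n} {α β : ℝ}
    (h₁ : w z₁ ≤ (α : EReal)) (h₂ : w z₂ ≤ (β : EReal)) {t : ℝ} (ht0 : 0 ≤ t) (ht1 : t ≤ 1) :
    w ((1 - t) • z₁ + t • z₂) ≤ (((1 - t) * α + t * β : ℝ) : EReal) := by
  have hmem := hw (Set.mem_setOf_eq ▸ h₁ : ((z₁, α) : En n × ℝ) ∈ _)
    (Set.mem_setOf_eq ▸ h₂ : ((z₂, β) : En n × ℝ) ∈ _)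
    (by linarith : (0:ℝ) ≤ 1 - t) ht0 (by ring)
  simpa [Prod.smul_mk, Prod.mk_add_mk, smul_eq_mul] using hmem

lemma crossing {n : ℕ} {u v : En n → EReal}
    (hul : LowerSemicontinuous u) (hvl : LowerSemicontinuous v)
    (hm : ConvexFn (fun x => u x ⊓ v x))
    (z₁ z₂ : En n) (α β : ℝ) (h₁ : u z₁ ≤ (α : EReal)) (h₂ : v z₂ ≤ (β : EReal)) :
    ∃ t : ℝ, 0 ≤ t ∧ t ≤ 1 ∧
      u ((1 - t) • z₁ + t • z₂) ≤ (((1 - t) * α + t * β : ℝ) : EReal) ∧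
      v ((1 - t) • z₁ + t • z₂) ≤ (((1 - t) * α + t * β : ℝ) : EReal) := by
  set zf : ℝ → En n := fun t => (1 - t) • z₁ + t • z₂ with hzf
  set L : ℝ → ℝ := fun t => (1 - t) * α + t * β with hLdef
  have hzc : Continuous zf := by
    apply Continuous.add
    · exact (continuous_const.sub continuous_id).smul continuous_const
    · exact continuous_id.smul continuous_const
  have hLc : Continuous L := by
    apply Continuous.add
    · exact (continuous_const.sub continuous_id).mul continuous_const
    · exact continuous_id.mul continuous_const
  set S := {t : ℝ | u (zf t) ≤ ((L t : ℝ) : EReal)} with hSdef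
  set T := {t : ℝ | v (zf t) ≤ ((L t : ℝ) : EReal)} with hTdef
  have hScl : IsClosed S := isClosed_sub_lsc (hul.comp hzc) hLc
  have hTcl : IsClosed T := isClosed_sub_lsc (hvl.comp hzc) hLc
  have hcov : Set.Icc (0:ℝ) 1 ⊆ S ∪ T := by
    intro t ht
    have hmem := convexFn_mem hm (le_trans (min_le_left _ _) h₁)
      (le_trans (min_le_right _ _) h₂) ht.1 ht.2
    rcases inf_le_iff.1 hmem with h | h
    · exact Or.inl h
    · exact Or.inr h
  have h0 : 0 ∈ S := by
    simp only [hSdef, Set.mem_setOf_eq, hzf, hLdef]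
    norm_num
    exact h₁
  have h1' : 1 ∈ T := by
    simp only [hTdef, Set.mem_setOf_eq, hzf, hLdef]
    norm_num
    exact h₂
  obtain ⟨t, htI, htS, htT⟩ :
      ∃ t, t ∈ Set.Icc (0:ℝ) 1 ∧ t ∈ S ∧ t ∈ T := by
    have hpc := (isPreconnected_closed_iff.1 isPreconnected_Icc) S T hScl hTcl hcov
      ⟨0, Set.mem_Icc.2 ⟨le_refl 0, zero_le_one⟩, h0⟩
      ⟨1, Set.mem_Icc.2 ⟨zero_le_one, le_refl 1⟩, h1'⟩
    obtain ⟨t, ht1, ht2, ht3⟩ := hpc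
    exact ⟨t, ht1, ht2, ht3⟩
  exact ⟨t, htI.1, htI.2, htS, htT⟩

lemma flat_of_bot {n : ℕ} {w : En n → EReal} (hw : ConvexFn w) (hwl : LowerSemicontinuous w)
    {a : En n} (ha : w a = ⊥) : ∀ b, w b ≠ ⊤ → w b = ⊥ := by
  intro b hb
  by_contra hbb
  have hβ : ((w b).toReal : EReal) = w b := EReal.coe_toReal hb hbb
  set βr : ℝ := (w b).toReal with hβr
  have hseg : ∀ t : ℝ, 0 ≤ t → t < 1 → w ((1 - t) • a + t • b) = ⊥ := by
    intro t ht0 ht1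
    apply ereal_bot_of_forall_le
    intro q
    set M : ℝ := (t * βr - q) / (1 - t) with hM
    have h1t : (1 : ℝ) - t ≠ 0 := by linarith
    have hma : w a ≤ ((-M : ℝ) : EReal) := by rw [ha]; exact bot_le
    have hcomb := convexFn_mem hw hma (le_of_eq hβ.symm) ht0 ht1.le
    refine le_trans hcomb (EReal.coe_le_coe_iff.2 (le_of_eq ?_))
    rw [hM, mul_neg, mul_div_cancel₀ _ h1t]; ring
  have hlt : ((βr - 1 : ℝ) : EReal) < w b := by
    rw [← hβ]; exact EReal.coe_lt_coe_iff.2 (by linarith)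
  have hev := hwl b _ hlt
  have htend : Tendsto (fun t : ℝ => (1 - t) • a + t • b) (𝓝[<] (1:ℝ)) (𝓝 b) := by
    have hc : Continuous (fun t : ℝ => (1 - t) • a + t • b) := by
      apply Continuous.add
      · exact (continuous_const.sub continuous_id).smul continuous_const
      · exact continuous_id.smul continuous_const
    have := (hc.tendsto 1).mono_left (nhdsWithin_le_nhds (s := Set.Iio (1:ℝ)))
    simpa using this
  have hlt1 : ∀ᶠ t in 𝓝[<] (1:ℝ), t < 1 := eventually_mem_nhdsWithin
  have hpos : ∀ᶠ t in 𝓝[<] (1:ℝ), (0:ℝ) < t :=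
    (eventually_gt_nhds (by norm_num : (0:ℝ) < 1)).filter_mono nhdsWithin_le_nhds
  obtain ⟨t, hwt, htlt, ht0⟩ := ((htend.eventually hev).and (hlt1.and hpos)).exists
  rw [hseg t ht0.le htlt] at hwt
  exact absurd hwt (by simp)

lemma conj_gt_bot {n : ℕ} {w : En n → EReal} (hwp : ∃ x, w x ≠ ⊤) (y : En n) :
    ⊥ < conj w y := by
  obtain ⟨x₀, hx₀⟩ := hwp
  refine lt_of_lt_of_le ?_ (le_iSup (fun x => ((⟪x, y⟫ : EReal) - w x)) x₀)
  rcases eq_or_ne (w x₀) ⊥ with hb | hb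
  · rw [hb, sub_eq_add_neg, EReal.neg_bot, EReal.add_top_of_ne_bot (EReal.coe_ne_bot _)]
    exact bot_lt_top
  · rw [← EReal.coe_toReal hx₀ hb, ← EReal.coe_sub]
    exact EReal.bot_lt_coe _

lemma regLip_apply {n : ℕ} (w : En n → EReal) (r : ℝ) (x : En n) :
    regLip w r x
      = ⨆ y, ((⟪y, x⟫ : EReal) - (conj w y + indFn (Metric.closedBall (0 : En n) (1 / r)) y)) :=
  rfl

lemma indFn_ne_bot {n : ℕ} (K : Set (En n)) (y : En n) : indFn K y ≠ ⊥ := by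
  unfold indFn; split
  · simp
  · simp

lemma regLip_bot {n : ℕ} {w : En n → EReal} {x₀ : En n} (h : w x₀ = ⊥) (r : ℝ) (x : En n) :
    regLip w r x = ⊥ := by
  rw [regLip_apply]
  refine le_bot_iff.1 (iSup_le fun y => ?_)
  have hconj : conj w y = ⊤ := by
    refine top_unique (le_trans (le_of_eq ?_) (le_iSup (fun x => ((⟪x, y⟫ : EReal) - w x)) x₀))
    rw [h, sub_eq_add_neg, EReal.neg_bot, EReal.add_top_of_ne_bot (EReal.coe_ne_bot _)]
  rw [hconj, EReal.top_add_of_ne_bot (indFn_ne_bot _ _), EReal.sub_top]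

/-- Key lemma: the Lipschitz regularization agrees with the Pasch–Hausdorff envelope. -/
lemma regLip_eq_pasch {n : ℕ} {w : En n → EReal} (hw : ConvexFn w)
    (hwb : ∀ x, w x ≠ ⊥) (hwp : ∃ x, w x ≠ ⊤) {r : ℝ} (hr : 0 < r) (x : En n) :
    regLip w r x = pasch w (1 / r) x := by
  set c : ℝ := 1 / r with hcdef
  have hc : 0 < c := by positivity
  apply le_antisymm
  · -- regLip ≤ pasch
    rw [regLip_apply]
    refine iSup_le fun y => ?_
    by_cases hy : y ∈ Metric.closedBall (0 : En n) (1 / r)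
    · have hyn : ‖y‖ ≤ c := by
        rw [Metric.mem_closedBall, dist_zero_right] at hy
        exact hy
      rw [indFn, if_pos hy, add_zero]
      refine le_iInf fun z => ?_
      rcases eq_or_ne (w z) ⊤ with hz | hz
      · rw [hz, EReal.top_add_of_ne_bot (EReal.coe_ne_bot _)]
        exact le_top
      · have hω : ((w z).toReal : EReal) = w z := EReal.coe_toReal hz (hwb z)
        set ω : ℝ := (w z).toReal with hωdef
        have key : (((⟪z, y⟫ - ω : ℝ)) : EReal) ≤ conj w y := by
          rw [EReal.coe_sub, hω]
          exact le_iSup (fun x => ((⟪x, y⟫ : EReal) - w x)) z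
        calc (⟪y, x⟫ : EReal) - conj w y
            ≤ (⟪y, x⟫ : EReal) - (((⟪z, y⟫ - ω : ℝ)) : EReal) := EReal.sub_le_sub le_rfl key
          _ = (((⟪y, x⟫ - (⟪z, y⟫ - ω) : ℝ)) : EReal) := by rw [← EReal.coe_sub]
          _ ≤ (((ω + c * ‖x - z‖ : ℝ)) : EReal) := by
              refine EReal.coe_le_coe_iff.2 ?_
              have h1 : ⟪y, x - z⟫ ≤ ‖y‖ * ‖x - z‖ := real_inner_le_norm y (x - z)
              have h2 : ⟪y, x - z⟫ = ⟪y, x⟫ - ⟪y, z⟫ := inner_sub_right y x z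
              have h3 : ⟪z, y⟫ = ⟪y, z⟫ := real_inner_comm y z
              have h4 : ‖y‖ * ‖x - z‖ ≤ c * ‖x - z‖ :=
                mul_le_mul_of_nonneg_right hyn (norm_nonneg _)
              linarith
          _ = w z + ((c * ‖x - z‖ : ℝ) : EReal) := by rw [EReal.coe_add, hω]
    · rw [indFn, if_neg hy, EReal.add_top_of_ne_bot (conj_gt_bot hwp y).ne',
        EReal.sub_top]
      exact bot_le
  · -- pasch ≤ regLip
    rcases eq_or_ne (pasch w c x) ⊥ with hbot | hbot
    · rw [hcdef] at hbot
      rw [hbot]; exact bot_le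
    · have hne_top : ∀ x', pasch w c x' ≠ ⊤ := fun x' => pasch_ne_top hwp c x'
      have hne_bot : ∀ x', pasch w c x' ≠ ⊥ := by
        intro x' hx'
        apply hbot
        refine le_bot_iff.1 ?_
        refine le_trans (pasch_le_add w hc.le x x') ?_
        rw [hx', EReal.bot_add]
      set f : En n → ℝ := fun x' => (pasch w c x').toReal with hfdef
      have hpf : ∀ x', pasch w c x' = ((f x' : ℝ) : EReal) :=
        fun x' => (EReal.coe_toReal (hne_top x') (hne_bot x')).symm
      have hlip : ∀ a b : En n, f a ≤ f b + c * ‖a - b‖ := by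
        intro a b
        have := pasch_le_add w hc.le a b
        rw [hpf a, hpf b, ← EReal.coe_add] at this
        exact EReal.coe_le_coe_iff.1 this
      have hcont : Continuous f := by
        refine LipschitzWith.continuous (K := Real.toNNReal c) ?_
        refine LipschitzWith.of_dist_le_mul fun a b => ?_
        rw [Real.dist_eq, Real.coe_toNNReal c hc.le, dist_eq_norm, abs_le]
        constructor
        · have := hlip b a
          rw [norm_sub_rev] at this
          linarith
        · linarith [hlip a b]
      have hconv : ConvexOn ℝ Set.univ f := by
        refine ⟨convex_univ, ?_⟩
        intro x₁ _ x₂ _ a b ha hb hab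
        simp only [smul_eq_mul]
        rw [← EReal.coe_le_coe_iff, ← hpf]
        refine ereal_le_of_forall_lt_real fun q hq => ?_
        set ε : ℝ := q - (a * f x₁ + b * f x₂) with hεdef
        have hε : 0 < ε := by
          have := EReal.coe_lt_coe_iff.1 hq
          simp only [hεdef]; linarith
        have hget : ∀ x' : En n, ∃ z : En n, ∃ ω : ℝ, (ω : EReal) = w z ∧
            ω + c * ‖x' - z‖ < f x' + ε := by
          intro x'
          have : pasch w c x' < ((f x' + ε : ℝ) : EReal) := by
            rw [hpf x']
            exact EReal.coe_lt_coe_iff.2 (by linarith)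
          obtain ⟨z, hz⟩ := iInf_lt_iff.1 this
          have hzt : w z ≠ ⊤ := by
            intro h
            rw [h, EReal.top_add_of_ne_bot (EReal.coe_ne_bot _)] at hz
            exact absurd hz (by simp)
          refine ⟨z, (w z).toReal, EReal.coe_toReal hzt (hwb z), ?_⟩
          rw [← EReal.coe_toReal hzt (hwb z), ← EReal.coe_add] at hz
          exact EReal.coe_lt_coe_iff.1 hz
        obtain ⟨z₁, ω₁, hω₁, hz₁⟩ := hget x₁
        obtain ⟨z₂, ω₂, hω₂, hz₂⟩ := hget x₂
        have hcomb := hw (Set.mem_setOf_eq ▸ le_of_eq hω₁.symm : ((z₁, ω₁) : En n × ℝ) ∈ _)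
          (Set.mem_setOf_eq ▸ le_of_eq hω₂.symm : ((z₂, ω₂) : En n × ℝ) ∈ _) ha hb hab
        simp only [Prod.smul_mk, Prod.mk_add_mk, smul_eq_mul, Set.mem_setOf_eq] at hcomb
        have hnorm : ‖(a • x₁ + b • x₂) - (a • z₁ + b • z₂)‖
            ≤ a * ‖x₁ - z₁‖ + b * ‖x₂ - z₂‖ := by
          have heq : (a • x₁ + b • x₂) - (a • z₁ + b • z₂) = a • (x₁ - z₁) + b • (x₂ - z₂) := by
            rw [smul_sub, smul_sub]; abel
          rw [heq]
          refine le_trans (norm_add_le _ _) ?_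
          rw [norm_smul, norm_smul, Real.norm_eq_abs, Real.norm_eq_abs,
            abs_of_nonneg ha, abs_of_nonneg hb]
        calc pasch w c (a • x₁ + b • x₂)
            ≤ w (a • z₁ + b • z₂) + ((c * ‖(a • x₁ + b • x₂) - (a • z₁ + b • z₂)‖ : ℝ) : EReal) :=
              pasch_le _ _ _ _
          _ ≤ ((a * ω₁ + b * ω₂ : ℝ) : EReal)
              + ((c * ‖(a • x₁ + b • x₂) - (a • z₁ + b • z₂)‖ : ℝ) : EReal) :=
              add_le_add_left hcomb _
          _ = ((a * ω₁ + b * ω₂ + c * ‖(a • x₁ + b • x₂) - (a • z₁ + b • z₂)‖ : ℝ) : EReal) := by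
              rw [← EReal.coe_add]
          _ ≤ (q : EReal) := by
              refine EReal.coe_le_coe_iff.2 ?_
              have h1 : a * (ω₁ + c * ‖x₁ - z₁‖) ≤ a * (f x₁ + ε) :=
                mul_le_mul_of_nonneg_left hz₁.le ha
              have h2 : b * (ω₂ + c * ‖x₂ - z₂‖) ≤ b * (f x₂ + ε) :=
                mul_le_mul_of_nonneg_left hz₂.le hb
              have h3 : c * ‖(a • x₁ + b • x₂) - (a • z₁ + b • z₂)‖
                  ≤ c * (a * ‖x₁ - z₁‖ + b * ‖x₂ - z₂‖) :=
                mul_le_mul_of_nonneg_left hnorm hc.le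
              nlinarith [hε]
      obtain ⟨y₀, hy₀⟩ := exists_subgradient f hconv hcont x
      have hy₀n : ‖y₀‖ ≤ c := by
        rcases eq_or_ne y₀ 0 with h | h
        · rw [h, norm_zero]; exact hc.le
        · have h1 := hy₀ (x + y₀)
          have h2 : f (x + y₀) ≤ f x + c * ‖y₀‖ := by
            have := hlip (x + y₀) x
            simpa using this
          rw [add_sub_cancel_left, real_inner_self_eq_norm_sq] at h1
          have hn : 0 < ‖y₀‖ := norm_pos_iff.2 h
          nlinarith
      have hconjle : conj w y₀ ≤ ((⟪x, y₀⟫ - f x : ℝ) : EReal) := by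
        refine iSup_le fun z => ?_
        rcases eq_or_ne (w z) ⊤ with hz | hz
        · rw [hz, EReal.sub_top]; exact bot_le
        · have hω : ((w z).toReal : EReal) = w z := EReal.coe_toReal hz (hwb z)
          rw [← hω, ← EReal.coe_sub]
          refine EReal.coe_le_coe_iff.2 ?_
          have h1 : f z ≤ (w z).toReal := by
            have h2 : pasch w c z ≤ ((w z).toReal : EReal) := by
              have := pasch_le w c z z
              simpa [hω] using this
            rw [hpf z] at h2
            exact EReal.coe_le_coe_iff.1 h2
          have h3 := hy₀ z
          have h4 : ⟪z - x, y₀⟫ = ⟪z, y₀⟫ - ⟪x, y₀⟫ := inner_sub_left z x y₀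
          linarith
      have hconjnb : conj w y₀ ≠ ⊥ := (conj_gt_bot hwp y₀).ne'
      have hconjnt : conj w y₀ ≠ ⊤ := ne_top_of_le_ne_top (EReal.coe_ne_top _) hconjle
      have hγ : ((conj w y₀).toReal : EReal) = conj w y₀ := EReal.coe_toReal hconjnt hconjnb
      have hyB : y₀ ∈ Metric.closedBall (0 : En n) (1 / r) := by
        rw [Metric.mem_closedBall, dist_zero_right]
        exact hy₀n
      have hfinal : ((f x : ℝ) : EReal)
          ≤ (⟪y₀, x⟫ : EReal) - (conj w y₀ + indFn (Metric.closedBall (0 : En n) (1 / r)) y₀) := by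
        rw [indFn, if_pos hyB, add_zero, ← hγ, ← EReal.coe_sub]
        refine EReal.coe_le_coe_iff.2 ?_
        have h1 : (conj w y₀).toReal ≤ ⟪x, y₀⟫ - f x := by
          have := hγ ▸ hconjle
          exact EReal.coe_le_coe_iff.1 this
        have h2 : ⟪y₀, x⟫ = ⟪x, y₀⟫ := real_inner_comm x y₀
        linarith
      rw [hcdef] at hpf
      rw [hpf x, regLip_apply]
      exact le_trans hfinal
        (le_iSup (fun y => ((⟪y, x⟫ : EReal)
          - (conj w y + indFn (Metric.closedBall (0 : En n) (1 / r)) y))) y₀)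

end Aux


lemma main_nondeg {n : ℕ} (u v : En n → EReal)
    (hu : ConvexFn u) (hv : ConvexFn v)
    (hul : LowerSemicontinuous u) (hvl : LowerSemicontinuous v)
    (hup : ∃ x, u x ≠ ⊤) (hvp : ∃ x, v x ≠ ⊤)
    (hmin : ConvexFn (fun x => u x ⊓ v x))
    (hub : ∀ x, u x ≠ ⊥) (hvb : ∀ x, v x ≠ ⊥) {r : ℝ} (hr : 0 < r) :
    (regLip (fun x => u x ⊓ v x) r = fun x => regLip u r x ⊓ regLip v r x) ∧
    (regLip (fun x => u x ⊔ v x) r = fun x => regLip u r x ⊔ regLip v r x) := by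
  have hc : (0:ℝ) < 1 / r := by positivity
  have hminb : ∀ x, u x ⊓ v x ≠ ⊥ := fun x =>
    (lt_min (Ne.bot_lt (hub x)) (Ne.bot_lt (hvb x))).ne'
  have hminp : ∃ x, u x ⊓ v x ≠ ⊤ := by
    obtain ⟨x, hx⟩ := hup
    exact ⟨x, ne_top_of_le_ne_top hx (min_le_left _ _)⟩
  have hmaxconv : ConvexFn (fun x => u x ⊔ v x) := by
    have hset : {p : En n × ℝ | (fun x => u x ⊔ v x) p.1 ≤ (p.2 : EReal)}
        = {p : En n × ℝ | u p.1 ≤ (p.2:EReal)} ∩ {p : En n × ℝ | v p.1 ≤ (p.2:EReal)} := by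
      ext p
      simp [Set.mem_inter_iff, Set.mem_setOf_eq, sup_le_iff]
    unfold ConvexFn
    rw [hset]
    exact hu.inter hv
  have hmaxb : ∀ x, u x ⊔ v x ≠ ⊥ := fun x =>
    (lt_of_lt_of_le (Ne.bot_lt (hub x)) le_sup_left).ne'
  have hmaxp : ∃ x, u x ⊔ v x ≠ ⊤ := by
    obtain ⟨x₁, h₁⟩ := hup
    obtain ⟨x₂, h₂⟩ := hvp
    obtain ⟨t, ht0, ht1, hut, hvt⟩ := crossing hul hvl hmin x₁ x₂ ((u x₁).toReal) ((v x₂).toReal)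
      (le_of_eq (EReal.coe_toReal h₁ (hub x₁)).symm)
      (le_of_eq (EReal.coe_toReal h₂ (hvb x₂)).symm)
    exact ⟨(1-t) • x₁ + t • x₂, ne_top_of_le_ne_top (EReal.coe_ne_top _) (sup_le hut hvt)⟩
  have hPmin : ∀ x, pasch (fun z => u z ⊓ v z) (1/r) x = pasch u (1/r) x ⊓ pasch v (1/r) x := by
    intro x
    apply le_antisymm
    · exact le_min (pasch_mono (fun z => min_le_left _ _) _ _)
        (pasch_mono (fun z => min_le_right _ _) _ _)
    · refine le_iInf fun z => ?_
      rcases le_total (u z) (v z) with h | h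
      · have hz : u z ⊓ v z = u z := inf_eq_left.2 h
        simp only [hz]
        exact le_trans (min_le_left _ _) (pasch_le u _ x z)
      · have hz : u z ⊓ v z = v z := inf_eq_right.2 h
        simp only [hz]
        exact le_trans (min_le_right _ _) (pasch_le v _ x z)
  have hPmax : ∀ x, pasch (fun z => u z ⊔ v z) (1/r) x = pasch u (1/r) x ⊔ pasch v (1/r) x := by
    intro x
    apply le_antisymm
    · refine ereal_le_of_forall_lt_real fun q hq => ?_
      obtain ⟨hq1, hq2⟩ := sup_lt_iff.1 hq
      obtain ⟨z₁, hz₁⟩ := iInf_lt_iff.1 hq1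
      obtain ⟨z₂, hz₂⟩ := iInf_lt_iff.1 hq2
      have h1t : u z₁ ≠ ⊤ := by
        intro h
        rw [h, EReal.top_add_of_ne_bot (EReal.coe_ne_bot _)] at hz₁
        exact absurd hz₁ (by simp)
      have h2t : v z₂ ≠ ⊤ := by
        intro h
        rw [h, EReal.top_add_of_ne_bot (EReal.coe_ne_bot _)] at hz₂
        exact absurd hz₂ (by simp)
      set α : ℝ := (u z₁).toReal with hαdef
      set β : ℝ := (v z₂).toReal with hβdef
      have hα : α + 1/r * ‖x - z₁‖ < q := by
        rw [← EReal.coe_toReal h1t (hub z₁), ← EReal.coe_add] at hz₁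
        exact EReal.coe_lt_coe_iff.1 hz₁
      have hβ : β + 1/r * ‖x - z₂‖ < q := by
        rw [← EReal.coe_toReal h2t (hvb z₂), ← EReal.coe_add] at hz₂
        exact EReal.coe_lt_coe_iff.1 hz₂
      obtain ⟨t, ht0, ht1, hut, hvt⟩ := crossing hul hvl hmin z₁ z₂ α β
        (le_of_eq (EReal.coe_toReal h1t (hub z₁)).symm)
        (le_of_eq (EReal.coe_toReal h2t (hvb z₂)).symm)
      refine le_trans (pasch_le _ _ _ ((1-t) • z₁ + t • z₂)) ?_
      have hsup : (fun z => u z ⊔ v z) ((1-t) • z₁ + t • z₂)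
          ≤ (((1-t) * α + t * β : ℝ) : EReal) := sup_le hut hvt
      refine le_trans (add_le_add_left hsup _) ?_
      rw [← EReal.coe_add]
      refine EReal.coe_le_coe_iff.2 ?_
      have hnorm : ‖x - ((1-t) • z₁ + t • z₂)‖ ≤ (1-t) * ‖x - z₁‖ + t * ‖x - z₂‖ := by
        have heq : x - ((1-t) • z₁ + t • z₂) = (1-t) • (x - z₁) + t • (x - z₂) := by
          rw [smul_sub, smul_sub]
          have hx : (1-t) • x + t • x = x := by
            rw [← add_smul]
            norm_num
          rw [show (1-t) • x - (1-t) • z₁ + (t • x - t • z₂)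
              = ((1-t) • x + t • x) - ((1-t) • z₁ + t • z₂) by abel, hx]
        rw [heq]
        refine le_trans (norm_add_le _ _) ?_
        rw [norm_smul, norm_smul, Real.norm_eq_abs, Real.norm_eq_abs,
          abs_of_nonneg (by linarith : (0:ℝ) ≤ 1 - t), abs_of_nonneg ht0]
      nlinarith [mul_le_mul_of_nonneg_left hα.le (by linarith : (0:ℝ) ≤ 1 - t),
        mul_le_mul_of_nonneg_left hβ.le ht0,
        mul_le_mul_of_nonneg_left hnorm (le_of_lt hc)]
    · exact sup_le (pasch_mono (fun z => le_sup_left) _ _)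
        (pasch_mono (fun z => le_sup_right) _ _)
  constructor
  · funext x
    rw [regLip_eq_pasch hmin hminb hminp hr x, regLip_eq_pasch hu hub hup hr x,
      regLip_eq_pasch hv hvb hvp hr x]
    exact hPmin x
  · funext x
    rw [regLip_eq_pasch hmaxconv hmaxb hmaxp hr x, regLip_eq_pasch hu hub hup hr x,
      regLip_eq_pasch hv hvb hvp hr x]
    exact hPmax x

lemma main_deg {n : ℕ} (u v : En n → EReal)
    (hu : ConvexFn u) (hv : ConvexFn v)
    (hul : LowerSemicontinuous u) (hvl : LowerSemicontinuous v)
    (hup : ∃ x, u x ≠ ⊤) (hvp : ∃ x, v x ≠ ⊤)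
    (hmin : ConvexFn (fun x => u x ⊓ v x))
    (hb : ∃ x, u x = ⊥) (r : ℝ) :
    (regLip (fun x => u x ⊓ v x) r = fun x => regLip u r x ⊓ regLip v r x) ∧
    (regLip (fun x => u x ⊔ v x) r = fun x => regLip u r x ⊔ regLip v r x) := by
  obtain ⟨x₀, hx₀⟩ := hb
  have huflat := flat_of_bot hu hul hx₀
  have hminl : LowerSemicontinuous (fun x => u x ⊓ v x) := by
    intro x y hy
    have h1 := hul x y (lt_of_lt_of_le hy (min_le_left _ _))
    have h2 := hvl x y (lt_of_lt_of_le hy (min_le_right _ _))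
    filter_upwards [h1, h2] with z hz1 hz2
    exact lt_min hz1 hz2
  have hminbot : (fun x => u x ⊓ v x) x₀ = ⊥ := by
    simp only
    rw [hx₀]
    exact bot_inf_eq _
  have hminflat := flat_of_bot hmin hminl hminbot
  have hRu : ∀ x, regLip u r x = ⊥ := regLip_bot hx₀ r
  have hRm : ∀ x, regLip (fun x => u x ⊓ v x) r x = ⊥ := regLip_bot hminbot r
  refine ⟨by funext x; rw [hRm x, hRu x, bot_inf_eq], ?_⟩
  by_cases hvbot : ∃ x, v x = ⊥
  · obtain ⟨x₂, hx₂⟩ := hvbot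
    have hRv : ∀ x, regLip v r x = ⊥ := regLip_bot hx₂ r
    obtain ⟨t, ht0, ht1, hut, hvt⟩ := crossing hul hvl hmin x₀ x₂ 0 0
      (by rw [hx₀]; exact bot_le) (by rw [hx₂]; exact bot_le)
    set e : En n := (1-t) • x₀ + t • x₂ with hedef
    have hue : u e = ⊥ := huflat e (ne_top_of_le_ne_top (EReal.coe_ne_top _) hut)
    have hve : v e = ⊥ :=
      flat_of_bot hv hvl hx₂ e (ne_top_of_le_ne_top (EReal.coe_ne_top _) hvt)
    have hsupbot : (fun x => u x ⊔ v x) e = ⊥ := by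
      simp only
      rw [hue, hve]
      simp
    have hRs : ∀ x, regLip (fun x => u x ⊔ v x) r x = ⊥ := regLip_bot hsupbot r
    funext x
    rw [hRs x, hRu x, hRv x]
    simp
  · push_neg at hvbot
    have hsup_eq : (fun x => u x ⊔ v x) = v := by
      funext x
      rcases eq_or_ne (u x) ⊤ with h | h
      · rcases eq_or_ne (v x) ⊤ with h2 | h2
        · show u x ⊔ v x = v x
          rw [h, h2]
          simp
        · exfalso
          have hmx : (fun x => u x ⊓ v x) x ≠ ⊤ :=
            ne_top_of_le_ne_top h2 (min_le_right _ _)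
          have := hminflat x hmx
          rw [h, top_inf_eq] at this
          exact hvbot x this
      · have hb' : u x = ⊥ := huflat x h
        show u x ⊔ v x = v x
        rw [hb']
        simp
    rw [hsup_eq]
    funext x
    rw [hRu x]
    simp

theorem regLip_min_max (n : ℕ) (u v : En n → EReal)
    (hu : ConvexFn u) (hv : ConvexFn v)
    (hul : LowerSemicontinuous u) (hvl : LowerSemicontinuous v)
    (hup : ∃ x, u x ≠ ⊤) (hvp : ∃ x, v x ≠ ⊤)
    (hmin : ConvexFn (fun x => u x ⊓ v x)) :
    ∃ r₀ > (0 : ℝ), ∀ r, 0 < r → r ≤ r₀ →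
      (regLip (fun x => u x ⊓ v x) r = fun x => regLip u r x ⊓ regLip v r x) ∧
      (regLip (fun x => u x ⊔ v x) r = fun x => regLip u r x ⊔ regLip v r x) := by
  refine ⟨1, one_pos, fun r hr _ => ?_⟩
  by_cases hub : ∃ x, u x = ⊥
  · exact main_deg u v hu hv hul hvl hup hvp hmin hub r
  · by_cases hvb : ∃ x, v x = ⊥
    · have hswap : (fun x => v x ⊓ u x) = (fun x => u x ⊓ v x) :=
        funext fun x => inf_comm _ _
      have hmin' : ConvexFn (fun x => v x ⊓ u x) := by
        rw [hswap]
        exact hmin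
      obtain ⟨h1, h2⟩ := main_deg v u hv hu hvl hul hvp hup hmin' hvb r
      constructor
      · rw [← hswap, h1]
        funext x
        exact inf_comm _ _
      · have hswap2 : (fun x => v x ⊔ u x) = (fun x => u x ⊔ v x) :=
          funext fun x => sup_comm _ _
        rw [← hswap2, h2]
        funext x
        exact sup_comm _ _
    · push_neg at hub hvb
      exact main_nondeg u v hu hv hul hvl hup hvp hmin hub hvb hr
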